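/- arXiv:1609.09670 — 2 statements merged into one kernel-verified Lean document; each statement's English description precedes it below -/
import Mathlib

section
/- In an exact category E, if there exists an admissible monomorphism M → T' with T' ∈ add T, then any left add(T)-approximation f: M → R is an admissible monomorphism. -/
open CategoryTheory Limits

/-- `X` belongs to `add T`: it is a direct summand of a finite direct sum of copies of `T`. -/
def MemAdd {E : Type*} [Category E] [Preadditive E] [HasFiniteBiproducts E]
    [HasBinaryBiproducts E] (T X : E) : Prop :=
  ∃ (n : ℕ) (Y : E), Nonempty ((X ⊞ Y) ≅ ⨁ fun _ : Fin n => T)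

/-- In an exact category `E` (with inflations `I` satisfying the axioms of an
exact structure: closure under composition, split monomorphisms are inflations, stability
under pushout, and the (dual) obscure axiom), if there exists an admissible monomorphism
`M → T'` with `T' ∈ add T`, then any left `add T`-approximation `f : M → R` is an
admissible monomorphism. -/
theorem left_approximation_admissible_mono
    {E : Type*} [Category E] [Preadditive E] [HasFiniteBiproducts E] [HasBinaryBiproducts E]
    [HasPushouts E]
    (I : MorphismProperty E)
    (hcomp : ∀ {X Y Z : E} (f : X ⟶ Y) (g : Y ⟶ Z), I f → I g → I (f ≫ g))
    (hsplit : ∀ {X Y : E} (f : X ⟶ Y), IsSplitMono f → I f)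
    (hstab : ∀ {X Y Z : E} (f : X ⟶ Y) (ι : X ⟶ Z), I ι → I (pushout.inl f ι))
    (hobscure : ∀ {X Y Z : E} (f : X ⟶ Y) (g : Y ⟶ Z), I (f ≫ g) → I g → I f)
    (T M : E)
    (hexists : ∃ (T' : E) (ι : M ⟶ T'), MemAdd T T' ∧ I ι)
    (R : E) (hR : MemAdd T R) (f : M ⟶ R)
    (happrox : ∀ T'' : E, MemAdd T T'' → ∀ g : M ⟶ T'', ∃ h : R ⟶ T'', f ≫ h = g) :
    I f := by
  obtain ⟨T', ι, hT', hι⟩ := hexists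
  obtain ⟨h, hh⟩ := happrox T' hT' ι
  have hinl : I (pushout.inl f ι) := hstab f ι hι
  have hr : pushout.inr f ι ≫ pushout.desc h (𝟙 T')
      (by rw [hh, Category.comp_id]) = 𝟙 T' := pushout.inr_desc _ _ _
  have hinr : I (pushout.inr f ι) := hsplit _ (IsSplitMono.mk' ⟨_, hr⟩)
  have hfi : I (f ≫ pushout.inl f ι) := by
    rw [pushout.condition]
    exact hcomp _ _ hι hinr
  exact hobscure _ _ hfi hinl
end

section
/- Let E be an exact category, f: R → M a morphism, and π: T' → M an admissible epimorphism such that π factors through f (π = f∘h for some h: T' → R). Form the pullback of f along π. Then the pullback projection g: X → T' is a split epimorphism, and consequently f is an admissible epimorphism. -/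
open CategoryTheory Limits

/-- In an exact category `E` (deflations `D` closed under composition,
containing split epimorphisms, stable under pullback, and satisfying the dual obscure
axiom), if `f : R → M` is a morphism and `π : T' → M` an admissible epimorphism factoring
through `f` (i.e. `π = f ∘ h`), then the pullback projection `g : X → T'` of the pullback
of `f` along `π` is a split epimorphism, and consequently `f` is an admissible
epimorphism. -/
theorem factoring_through_deflation
    {E : Type*} [Category E] [HasPullbacks E]
    (D : MorphismProperty E)
    (hcomp : ∀ {X Y Z : E} (f : X ⟶ Y) (g : Y ⟶ Z), D f → D g → D (f ≫ g))
    (hsplit : ∀ {X Y : E} (f : X ⟶ Y), IsSplitEpi f → D f)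
    (hstab : ∀ {X Y Z : E} (f : X ⟶ Z) (π : Y ⟶ Z), D π → D (pullback.fst f π))
    (hobscure : ∀ {X Y Z : E} (f : X ⟶ Y) (g : Y ⟶ Z), D (f ≫ g) → D f → D g)
    {R M T' : E} (f : R ⟶ M) (π : T' ⟶ M) (hπ : D π)
    (h : T' ⟶ R) (hh : h ≫ f = π) :
    IsSplitEpi (pullback.snd f π) ∧ D f := by
  have hse : IsSplitEpi (pullback.snd f π) :=
    ⟨⟨pullback.lift h (𝟙 T') (by simpa using hh), pullback.lift_snd _ _ _⟩⟩
  refine ⟨hse, ?_⟩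
  have h1 : D (pullback.fst f π ≫ f) := by
    rw [pullback.condition]
    exact hcomp _ _ (hsplit _ hse) hπ
  exact hobscure _ _ h1 (hstab f π hπ)
end
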